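/- For every nonnegative integer n, ∑_{k=0}^{⌊n/2⌋} (1/2^{n-k}) · C(n-k, k) = 2/3 + (1/3)·(-1/2)^n. -/

import Mathlib

private def diagA (n : ℕ) : ℕ := ∑ k ∈ Finset.range (n + 1), (n - k).choose k * 2 ^ k

private lemma diagA_rec (n : ℕ) : diagA (n + 2) = diagA (n + 1) + 2 * diagA n := by
  have h1 : diagA (n + 1)
      = ∑ k ∈ Finset.range (n + 1), (n - k).choose (k + 1) * 2 ^ (k + 1) + 1 := by
    rw [diagA, Finset.sum_range_succ']
    simp [Nat.succ_sub_succ]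
  have h2 : diagA (n + 2)
      = ∑ k ∈ Finset.range (n + 2), (n + 1 - k).choose (k + 1) * 2 ^ (k + 1) + 1 := by
    rw [diagA, Finset.sum_range_succ']
    simp [Nat.succ_sub_succ]
  rw [h2, Finset.sum_range_succ]
  have hlast : (n + 1 - (n + 1)).choose (n + 1 + 1) = 0 := by
    apply Nat.choose_eq_zero_of_lt; omega
  rw [hlast]
  have hsplit : ∑ k ∈ Finset.range (n + 1), (n + 1 - k).choose (k + 1) * 2 ^ (k + 1)
      = ∑ k ∈ Finset.range (n + 1),
          ((n - k).choose k * 2 ^ (k + 1) + (n - k).choose (k + 1) * 2 ^ (k + 1)) := by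
    apply Finset.sum_congr rfl
    intro k hk
    rw [Finset.mem_range] at hk
    have : n + 1 - k = (n - k) + 1 := by omega
    rw [this, Nat.choose_succ_succ, add_mul]
  rw [hsplit, Finset.sum_add_distrib]
  have h3 : ∑ k ∈ Finset.range (n + 1), (n - k).choose k * 2 ^ (k + 1)
      = 2 * diagA n := by
    rw [diagA, Finset.mul_sum]
    apply Finset.sum_congr rfl
    intro k _
    ring
  rw [h3, h1]
  ring

private lemma diagA_val (n : ℕ) : (3 : ℤ) * diagA n = 2 ^ (n + 1) + (-1) ^ n := by
  induction n using Nat.twoStepInduction with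
  | zero => simp [diagA]
  | one => simp [diagA, Finset.sum_range_succ]
  | more n ih1 ih2 =>
    rw [diagA_rec]
    push_cast
    push_cast at ih1 ih2
    ring_nf
    ring_nf at ih1 ih2
    linarith

theorem binomial_short_diagonal_sum (n : ℕ) :
    ∑ k ∈ Finset.range (n / 2 + 1), ((n - k).choose k : ℝ) / 2 ^ (n - k)
      = 2 / 3 + (1 / 3) * (-1 / 2 : ℝ) ^ n := by
  have hext : ∑ k ∈ Finset.range (n / 2 + 1), ((n - k).choose k : ℝ) / 2 ^ (n - k)
      = ∑ k ∈ Finset.range (n + 1), ((n - k).choose k : ℝ) / 2 ^ (n - k) := by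
    apply Finset.sum_subset
    · intro x hx; rw [Finset.mem_range] at *; omega
    · intro x hx hx'
      rw [Finset.mem_range] at *
      have : (n - x).choose x = 0 := by
        apply Nat.choose_eq_zero_of_lt; omega
      simp [this]
  have hterm : ∀ k ∈ Finset.range (n + 1),
      ((n - k).choose k : ℝ) / 2 ^ (n - k)
        = ((n - k).choose k * 2 ^ k : ℝ) / 2 ^ n := by
    intro k hk
    rw [Finset.mem_range] at hk
    have hn : (2 : ℝ) ^ (n - k) * 2 ^ k = 2 ^ n := by
      rw [← pow_add]
      congr 1
      omega
    rw [div_eq_div_iff (by positivity) (by positivity)]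
    rw [← hn]
    ring
  rw [hext, Finset.sum_congr rfl hterm, ← Finset.sum_div]
  have hA : (∑ k ∈ Finset.range (n + 1), ((n - k).choose k * 2 ^ k : ℝ))
      = (diagA n : ℝ) := by
    rw [diagA]
    push_cast
    ring
  rw [hA]
  have hval : (3 : ℝ) * diagA n = 2 ^ (n + 1) + (-1) ^ n := by
    have := diagA_val n
    exact_mod_cast congrArg (Int.cast : ℤ → ℝ) this
  have hD : (diagA n : ℝ) = (2 ^ (n + 1) + (-1) ^ n) / 3 := by
    linarith
  rw [hD]
  have h2 : (2 : ℝ) ^ n ≠ 0 := by positivity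
  rw [div_pow]
  field_simp
  ring
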